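/- Let f̂ be L-smooth and convex, and consider one iteration of the Bant update x^{t+1} = x^t − γ Σ_{i=1}^n 𝟙[f̂(x^t) − f̂(x^t − γg_i^t) > 0] ω_i^t g_i^t with momentum weights ω_i^t summing to one. Then, with 𝒢 the set of honest workers at iteration t, the following descent inequality holds: f̂(x^{t+1}) ≤ f̂(x^t) − (γβ/n)⟨∇f̂(x^t), Σ_{i∈𝒢} g_i^t⟩ + (Lγ²β/(2n))Σ_{i∈𝒢}‖g_i^t‖². -/

import Mathlib

open scoped Classical RealInnerProductSpace

noncomputable section

/-- Euclidean parameter space ℝ^d. -/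
abbrev Vec (dd : ℕ) := EuclideanSpace ℝ (Fin dd)

/-- Quadratic upper bound (descent lemma) for a function with `L`-Lipschitz gradient. -/
lemma bant_descent_aux {dd : ℕ} (L : ℝ) (f : Vec dd → ℝ)
    (hdiff : Differentiable ℝ f)
    (hsmooth : ∀ y z, ‖gradient f y - gradient f z‖ ≤ L * ‖y - z‖)
    (x y : Vec dd) :
    f y ≤ f x + ⟪gradient f x, y - x⟫ + L / 2 * ‖y - x‖ ^ 2 := by
  set v := y - x with hv
  have key : ∀ t : ℝ, HasDerivAt (fun t : ℝ => f (x + t • v)) ⟪gradient f (x + t • v), v⟫ t := by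
    intro t
    have hc : HasDerivAt (fun t : ℝ => x + t • v) v t := by
      simpa using ((hasDerivAt_id t).smul_const v).const_add x
    have hfg : HasGradientAt f (gradient f (x + t • v)) (x + t • v) :=
      (hdiff _).hasGradientAt
    have hfd := (hasGradientAt_iff_hasFDerivAt.1 hfg).comp_hasDerivAt t hc
    simpa [InnerProductSpace.toDual_apply_apply, Function.comp_def] using hfd
  set C := ⟪gradient f x, v⟫ with hC
  set ψ : ℝ → ℝ := fun t => f (x + t • v) - t * C - L / 2 * ‖v‖ ^ 2 * t ^ 2 with hψ
  have hψd : ∀ t : ℝ, HasDerivAt ψ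
      (⟪gradient f (x + t • v), v⟫ - C - L / 2 * ‖v‖ ^ 2 * (2 * t)) t := by
    intro t
    have h1 : HasDerivAt (fun t : ℝ => t * C) C t := hasDerivAt_mul_const C
    have h2 : HasDerivAt (fun t : ℝ => L / 2 * ‖v‖ ^ 2 * t ^ 2) (L / 2 * ‖v‖ ^ 2 * (2 * t)) t := by
      convert (hasDerivAt_pow 2 t).const_mul (L / 2 * ‖v‖ ^ 2) using 1
      · rfl
      · rfl
      · push_cast; ring
    exact ((key t).sub h1).sub h2
  have hψdiff : Differentiable ℝ ψ := fun t => (hψd t).differentiableAt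
  have hderiv_nonpos : ∀ t ∈ interior (Set.Icc (0:ℝ) 1), deriv ψ t ≤ 0 := by
    intro t ht
    rw [interior_Icc] at ht
    rw [(hψd t).deriv]
    have hineq : ⟪gradient f (x + t • v) - gradient f x, v⟫ ≤ L * t * ‖v‖ ^ 2 := by
      calc ⟪gradient f (x + t • v) - gradient f x, v⟫
          ≤ ‖gradient f (x + t • v) - gradient f x‖ * ‖v‖ := real_inner_le_norm _ _
        _ ≤ (L * ‖(x + t • v) - x‖) * ‖v‖ := by
            gcongr; exact hsmooth _ _
        _ = L * t * ‖v‖ ^ 2 := by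
            have : (x + t • v) - x = t • v := by abel
            rw [this, norm_smul, Real.norm_eq_abs, abs_of_pos ht.1]; ring
    have : ⟪gradient f (x + t • v), v⟫ - C = ⟪gradient f (x + t • v) - gradient f x, v⟫ := by
      rw [inner_sub_left]
    rw [sub_sub, ← sub_sub, this]
    nlinarith [hineq]
  have hanti : AntitoneOn ψ (Set.Icc (0:ℝ) 1) :=
    antitoneOn_of_deriv_nonpos (convex_Icc 0 1) hψdiff.continuous.continuousOn
      hψdiff.differentiableOn hderiv_nonpos
  have h01 := hanti (Set.mem_Icc.2 ⟨le_refl 0, zero_le_one⟩)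
    (Set.mem_Icc.2 ⟨zero_le_one, le_refl 1⟩) zero_le_one
  simp only [hψ] at h01
  have e0 : x + (0:ℝ) • v = x := by simp
  have e1 : x + (1:ℝ) • v = y := by simp [hv]
  rw [e0, e1] at h01
  simp at h01
  linarith

/-- **Lemma 3 (descent lemma for one Bant iteration).**
Let `fhat` be `L`-smooth and convex, and consider one iteration of the Bant update
`x⁺ = x − γ Σᵢ 𝟙[f̂(x) − f̂(x − γgᵢ) > 0] ωᵢ gᵢ`, where the momentum weights `ωᵢ`
are built from nonnegative previous weights summing to one. Then, with `𝒢` the set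
of honest workers at this iteration,
`f̂(x⁺) ≤ f̂(x) − (γβ/n)⟨∇f̂(x), Σ_{i∈𝒢} gᵢ⟩ + (Lγ²β/(2n))Σ_{i∈𝒢}‖gᵢ‖²`. -/
theorem bant_descent_lemma
    (dd n : ℕ) (hn : 0 < n)
    (γ β L : ℝ) (hL : 0 < L) (hγ : 0 < γ) (hβ0 : 0 < β) (hβ1 : β ≤ 1)
    (fhat : Vec dd → ℝ)
    -- Assumption 1: L-smoothness of the trial function
    (hdiff : Differentiable ℝ fhat)
    (hsmooth : ∀ y z, ‖gradient fhat y - gradient fhat z‖ ≤ L * ‖y - z‖)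
    -- Assumption 2(b): convexity of the trial function
    (hconv : ConvexOn ℝ Set.univ fhat)
    -- current iterate and received (possibly Byzantine) vectors
    (x : Vec dd) (g : Fin n → Vec dd)
    -- previous-iteration weights: nonnegative, summing to one
    (wprev : Fin n → ℝ) (hwprev0 : ∀ i, 0 ≤ wprev i) (hwprev1 : ∑ i, wprev i = 1)
    -- Bant weights with momentum β
    (w : Fin n → ℝ)
    (hw : ∀ i, w i = (1 - β) * wprev i
      + β * (if ∀ j, fhat x - fhat (x - γ • g j) ≤ 0
             then 1 / (n : ℝ)
             else max (fhat x - fhat (x - γ • g i)) 0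
                  / ∑ j, max (fhat x - fhat (x - γ • g j)) 0))
    -- honest workers at this iteration
    (𝒢 : Finset (Fin n)) :
    fhat (x - γ • ∑ i, (if 0 < fhat x - fhat (x - γ • g i) then w i else 0) • g i)
      ≤ fhat x - (γ * β / (n : ℝ)) * ⟪gradient fhat x, ∑ i ∈ 𝒢, g i⟫
        + (L * γ ^ 2 * β / (2 * (n : ℝ))) * ∑ i ∈ 𝒢, ‖g i‖ ^ 2 := by
  have hn' : (0:ℝ) < (n:ℝ) := by exact_mod_cast hn
  set h : Fin n → ℝ := fun i => fhat x - fhat (x - γ • g i) with hh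
  have hrw : ∀ i, fhat x - fhat (x - γ • g i) = h i := fun _ => rfl
  simp only [hrw]
  set m : Fin n → ℝ := fun i => max (h i) 0 with hm
  set S : ℝ := ∑ j, m j with hSdef
  have hm0 : ∀ i, 0 ≤ m i := fun i => le_max_right _ _
  -- descent lemma for each worker
  have hdesc : ∀ i, γ * ⟪gradient fhat x, g i⟫ - L * γ ^ 2 / 2 * ‖g i‖ ^ 2 ≤ h i := by
    intro i
    have := bant_descent_aux L fhat hdiff hsmooth x (x - γ • g i)
    have hsub : (x - γ • g i) - x = -(γ • g i) := by abel
    rw [hsub] at this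
    have hin : ⟪gradient fhat x, -(γ • g i)⟫ = -(γ * ⟪gradient fhat x, g i⟫) := by
      rw [inner_neg_right, real_inner_smul_right]
    have hnrm : ‖-(γ • g i)‖ ^ 2 = γ ^ 2 * ‖g i‖ ^ 2 := by
      rw [norm_neg, norm_smul, Real.norm_eq_abs, mul_pow, sq_abs]
    rw [hin, hnrm] at this
    simp only [hh]
    nlinarith [this]
  -- positivity of S when some trial decrease is positive
  have hSpos : (¬ ∀ j, h j ≤ 0) → 0 < S := by
    intro hc
    push_neg at hc
    obtain ⟨j, hj⟩ := hc
    refine Finset.sum_pos' (fun i _ => hm0 i) ⟨j, Finset.mem_univ j, ?_⟩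
    exact lt_of_lt_of_le hj (le_max_left _ _)
  -- weights are nonnegative
  have hw0 : ∀ i, 0 ≤ w i := by
    intro i
    rw [hw i]
    have h1 : 0 ≤ (1 - β) * wprev i := mul_nonneg (by linarith) (hwprev0 i)
    have h2 : 0 ≤ (if ∀ j, h j ≤ 0 then 1 / (n : ℝ) else m i / S) := by
      split_ifs with hc
      · positivity
      · exact div_nonneg (hm0 i) (hSpos hc).le
    have := mul_nonneg hβ0.le h2
    simp only [hh, hm, hSdef] at *
    linarith
  -- weights sum to one
  have hw1 : ∑ i, w i = 1 := by
    have : ∑ i, w i = (1 - β) * ∑ i, wprev i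
        + β * ∑ i, (if ∀ j, h j ≤ 0 then 1 / (n : ℝ) else m i / S) := by
      rw [Finset.mul_sum, Finset.mul_sum, ← Finset.sum_add_distrib]
      exact Finset.sum_congr rfl fun i _ => hw i
    rw [this, hwprev1]
    split_ifs with hc
    · rw [Finset.sum_const, Finset.card_univ, Fintype.card_fin, nsmul_eq_mul]
      field_simp
      ring
    · rw [← Finset.sum_div]
      rw [← hSdef, div_self (hSpos hc).ne']
      ring
  -- the trial points
  set z : Fin n → Vec dd := fun i => if 0 < h i then x - γ • g i else x with hz
  -- the update point as a convex combination
  have hcomb : ∑ i, w i • z i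
      = x - γ • ∑ i, (if 0 < h i then w i else 0) • g i := by
    have : ∀ i, w i • z i = w i • x - γ • ((if 0 < h i then w i else 0) • g i) := by
      intro i
      simp only [hz]
      split_ifs with hi
      · rw [smul_sub, smul_comm]
      · simp
    rw [Finset.sum_congr rfl fun i _ => this i, Finset.sum_sub_distrib,
      ← Finset.sum_smul, hw1, one_smul, ← Finset.smul_sum]
  -- Jensen's inequality
  have hJ : fhat (∑ i, w i • z i) ≤ ∑ i, w i * fhat (z i) :=
    hconv.map_sum_le (fun i _ => hw0 i) hw1 (fun i _ => Set.mem_univ _)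
  have hzval : ∀ i, fhat (z i) = fhat x - (if 0 < h i then h i else 0) := by
    intro i
    simp only [hz]
    split_ifs with hi
    · simp [hh]
    · simp
  have hJ2 : ∑ i, w i * fhat (z i)
      = fhat x - ∑ i, (if 0 < h i then w i else 0) * h i := by
    rw [Finset.sum_congr rfl fun i _ => by rw [hzval i]]
    have : ∀ i, w i * (fhat x - (if 0 < h i then h i else 0))
        = w i * fhat x - (if 0 < h i then w i else 0) * h i := by
      intro i
      split_ifs with hi <;> ring
    rw [Finset.sum_congr rfl fun i _ => this i, Finset.sum_sub_distrib,
      ← Finset.sum_mul, hw1, one_mul]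
  -- core inequality: the aggregated decrease dominates (β/n) Σ_𝒢 h i
  have hcore : (β / (n:ℝ)) * ∑ i ∈ 𝒢, h i ≤ ∑ i, (if 0 < h i then w i else 0) * h i := by
    by_cases hc : ∀ j, h j ≤ 0
    · have hR : ∑ i, (if 0 < h i then w i else 0) * h i = 0 := by
        refine Finset.sum_eq_zero fun i _ => ?_
        rw [if_neg (not_lt.2 (hc i)), zero_mul]
      have hL2 : ∑ i ∈ 𝒢, h i ≤ 0 := Finset.sum_nonpos fun i _ => hc i
      rw [hR]
      exact mul_nonpos_of_nonneg_of_nonpos (by positivity) hL2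
    · have hS : 0 < S := hSpos hc
      have step1 : ∀ i, β * (m i) ^ 2 / S ≤ (if 0 < h i then w i else 0) * h i := by
        intro i
        by_cases hi : 0 < h i
        · rw [if_pos hi]
          have hmi : m i = h i := max_eq_left hi.le
          have hwi : β * (m i / S) ≤ w i := by
            rw [hw i, if_neg hc]
            have : 0 ≤ (1 - β) * wprev i := mul_nonneg (by linarith) (hwprev0 i)
            simp only [hh, hm, hSdef] at *
            linarith
          calc β * (m i) ^ 2 / S = (β * (m i / S)) * h i := by rw [hmi]; field_simp
            _ ≤ w i * h i := mul_le_mul_of_nonneg_right hwi hi.le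
        · rw [if_neg hi]
          have hmi : m i = 0 := max_eq_right (not_lt.1 hi)
          rw [hmi]
          simp
      have hcheb : S ^ 2 ≤ (n : ℝ) * ∑ i, (m i) ^ 2 := by
        have := sq_sum_le_card_mul_sum_sq (s := Finset.univ) (f := m)
        simpa [hSdef, Finset.card_univ] using this
      have step2 : β * S / (n:ℝ) ≤ ∑ i, β * (m i) ^ 2 / S := by
        have h1 : ∑ i, β * (m i) ^ 2 / S = (β / S) * ∑ i, (m i) ^ 2 := by
          rw [Finset.mul_sum]
          exact Finset.sum_congr rfl fun i _ => by ring
        rw [h1]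
        have h2 : S ^ 2 / (n:ℝ) ≤ ∑ i, (m i) ^ 2 := by
          rw [div_le_iff₀ hn']; linarith
        have h3 : (β / S) * (S ^ 2 / (n:ℝ)) = β * S / (n:ℝ) := by
          field_simp
        calc β * S / (n:ℝ) = (β / S) * (S ^ 2 / (n:ℝ)) := h3.symm
          _ ≤ (β / S) * ∑ i, (m i) ^ 2 :=
            mul_le_mul_of_nonneg_left h2 (by positivity)
      have step3 : ∑ i ∈ 𝒢, h i ≤ S := by
        calc ∑ i ∈ 𝒢, h i ≤ ∑ i ∈ 𝒢, m i :=
            Finset.sum_le_sum fun i _ => le_max_left _ _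
          _ ≤ ∑ i, m i :=
            Finset.sum_le_sum_of_subset_of_nonneg (Finset.subset_univ 𝒢)
              (fun i _ _ => hm0 i)
      calc (β / (n:ℝ)) * ∑ i ∈ 𝒢, h i ≤ (β / (n:ℝ)) * S :=
          mul_le_mul_of_nonneg_left step3 (by positivity)
        _ = β * S / (n:ℝ) := by ring
        _ ≤ ∑ i, β * (m i) ^ 2 / S := step2
        _ ≤ ∑ i, (if 0 < h i then w i else 0) * h i := Finset.sum_le_sum fun i _ => step1 i
  -- per-worker lower bound summed over honest workers
  have hsum_desc : ∑ i ∈ 𝒢, (γ * ⟪gradient fhat x, g i⟫ - L * γ ^ 2 / 2 * ‖g i‖ ^ 2)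
      ≤ ∑ i ∈ 𝒢, h i := Finset.sum_le_sum fun i _ => hdesc i
  -- assemble
  have hmain : fhat (x - γ • ∑ i, (if 0 < h i then w i else 0) • g i)
      ≤ fhat x - (β / (n:ℝ)) * ∑ i ∈ 𝒢, h i := by
    rw [← hcomb]
    calc fhat (∑ i, w i • z i) ≤ ∑ i, w i * fhat (z i) := hJ
      _ = fhat x - ∑ i, (if 0 < h i then w i else 0) * h i := hJ2
      _ ≤ fhat x - (β / (n:ℝ)) * ∑ i ∈ 𝒢, h i := by linarith [hcore]
  have hexp : ∑ i ∈ 𝒢, (γ * ⟪gradient fhat x, g i⟫ - L * γ ^ 2 / 2 * ‖g i‖ ^ 2)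
      = γ * ⟪gradient fhat x, ∑ i ∈ 𝒢, g i⟫ - L * γ ^ 2 / 2 * ∑ i ∈ 𝒢, ‖g i‖ ^ 2 := by
    rw [Finset.sum_sub_distrib, inner_sum, Finset.mul_sum, Finset.mul_sum]
  have hfin : (β / (n:ℝ)) * (γ * ⟪gradient fhat x, ∑ i ∈ 𝒢, g i⟫
      - L * γ ^ 2 / 2 * ∑ i ∈ 𝒢, ‖g i‖ ^ 2)
      ≤ (β / (n:ℝ)) * ∑ i ∈ 𝒢, h i := by
    apply mul_le_mul_of_nonneg_left _ (by positivity)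
    rw [← hexp]; exact hsum_desc
  calc fhat (x - γ • ∑ i, (if 0 < h i then w i else 0) • g i)
      ≤ fhat x - (β / (n:ℝ)) * ∑ i ∈ 𝒢, h i := hmain
    _ ≤ fhat x - (β / (n:ℝ)) * (γ * ⟪gradient fhat x, ∑ i ∈ 𝒢, g i⟫
        - L * γ ^ 2 / 2 * ∑ i ∈ 𝒢, ‖g i‖ ^ 2) := by linarith [hfin]
    _ = fhat x - (γ * β / (n : ℝ)) * ⟪gradient fhat x, ∑ i ∈ 𝒢, g i⟫
        + (L * γ ^ 2 * β / (2 * (n : ℝ))) * ∑ i ∈ 𝒢, ‖g i‖ ^ 2 := by ring
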